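/- (Equivalence of the algebraic and the joint-angle descriptions of the configuration space.) Let a = (a_1,…,a_n) with all a_i > 0 and n ≥ 2, and let p_1,…,p_n ∈ ℝ³ satisfy p_1 = 0, p_n = (a_n, 0, 0) and ‖p_j − p_{j+1}‖ = a_j for 1 ≤ j ≤ n−1. Then there exist angle vectors φ ∈ [0,2π)^{n-1} and θ ∈ [0,π]^{n-1} such that f_{a,k}(φ_1,…,φ_k, θ_1,…,θ_k) = p_{k+1} for every 1 ≤ k ≤ n−1; in particular f_{a,n-1}(φ,θ) = (a_n, 0, 0), so (φ,θ) is a closed configuration of the chain. -/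

import Mathlib

open Real

/-- The `k`-th endpoint map of a spherical-joint kinematic chain with link lengths
`a 1, …, a n` and joint angles `φ j ∈ [0,2π)`, `θ j ∈ [0,π]`. -/
noncomputable def chainEndpoint (a φ θ : ℕ → ℝ) (k : ℕ) : EuclideanSpace ℝ (Fin 3) :=
  ∑ j ∈ Finset.Icc 1 k, a j •
    (WithLp.equiv 2 (Fin 3 → ℝ)).symm
      ![Real.sin (θ j) * Real.cos (φ j), Real.sin (θ j) * Real.sin (φ j), Real.cos (θ j)]

lemma sph_comp (r : ℝ) (w : Fin 3 → ℝ) (i : Fin 3) :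
    (r • (WithLp.equiv 2 (Fin 3 → ℝ)).symm w) i = r * w i := rfl

lemma sph (v : EuclideanSpace ℝ (Fin 3)) (r : ℝ) (hr : 0 < r) (hv : ‖v‖ = r) :
    ∃ q : ℝ × ℝ, q.1 ∈ Set.Ico (0:ℝ) (2*π) ∧ q.2 ∈ Set.Icc (0:ℝ) π ∧
      r • (WithLp.equiv 2 (Fin 3 → ℝ)).symm
        ![Real.sin q.2 * Real.cos q.1, Real.sin q.2 * Real.sin q.1, Real.cos q.2] = v := by
  set x := v 0 with hx; set y := v 1 with hy; set z := v 2 with hz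
  have h1 : ‖v‖^2 = x^2 + y^2 + z^2 := by
    rw [EuclideanSpace.norm_eq, Real.sq_sqrt (by positivity)]
    simp [Fin.sum_univ_three, Real.norm_eq_abs, sq_abs]; rfl
  have hsum : x^2 + y^2 + z^2 = r^2 := by rw [← h1, hv]
  have hzr : |z| ≤ r := by nlinarith [sq_abs z, abs_nonneg z, sq_nonneg x, sq_nonneg y]
  have hzr1 : -1 ≤ z / r := by rw [le_div_iff₀ hr]; nlinarith [abs_le.mp hzr]
  have hzr2 : z / r ≤ 1 := by rw [div_le_iff₀ hr]; nlinarith [abs_le.mp hzr]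
  set θ := Real.arccos (z / r) with hθ
  have hcos : Real.cos θ = z / r := Real.cos_arccos hzr1 hzr2
  set s := Real.sqrt (x^2 + y^2) with hs
  have hsin : Real.sin θ = s / r := by
    rw [hθ, Real.sin_arccos]
    have : 1 - (z/r)^2 = (x^2 + y^2) / r^2 := by field_simp; nlinarith
    rw [this, Real.sqrt_div (by positivity), Real.sqrt_sq hr.le]
  have hθmem : θ ∈ Set.Icc (0:ℝ) π := ⟨Real.arccos_nonneg _, Real.arccos_le_pi _⟩
  by_cases hs0 : s = 0
  · have hxy : x = 0 ∧ y = 0 := by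
      have := Real.sqrt_eq_zero (by positivity) |>.mp hs0
      constructor <;> nlinarith
    refine ⟨(0, θ), ⟨le_refl _, by positivity⟩, hθmem, ?_⟩
    ext i
    fin_cases i <;>
      simp [sph_comp, hsin, hcos, hs0, hxy.1, hxy.2, ← hx, ← hy, ← hz] <;>
      (try field_simp)
  · have hspos : 0 < s := lt_of_le_of_ne (Real.sqrt_nonneg _) (Ne.symm hs0)
    set w : ℂ := ⟨x, y⟩ with hw
    have hwne : w ≠ 0 := by
      intro h
      apply hs0
      have hx0 : x = 0 := congrArg Complex.re h
      have hy0 : y = 0 := congrArg Complex.im h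
      simp [hs, hx0, hy0]
    have habs : ‖w‖ = s := by
      rw [Complex.norm_def, Complex.normSq_mk]; congr 1; ring
    have hcosarg : Real.cos (Complex.arg w) = x / s := by
      rw [Complex.cos_arg hwne, habs]
    have hsinarg : Real.sin (Complex.arg w) = y / s := by
      rw [Complex.sin_arg, habs]
    set φ := if 0 ≤ Complex.arg w then Complex.arg w else Complex.arg w + 2*π with hφ
    have hcosφ : Real.cos φ = x / s := by
      rw [hφ]; split
      · exact hcosarg
      · rw [Real.cos_add_two_pi]; exact hcosarg
    have hsinφ : Real.sin φ = y / s := by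
      rw [hφ]; split
      · exact hsinarg
      · rw [Real.sin_add_two_pi]; exact hsinarg
    have hφmem : φ ∈ Set.Ico (0:ℝ) (2*π) := by
      rw [hφ]
      have h1 := Complex.neg_pi_lt_arg w
      have h2 := Complex.arg_le_pi w
      have hπ := Real.pi_pos
      split <;> constructor <;> linarith
    refine ⟨(φ, θ), hφmem, hθmem, ?_⟩
    ext i
    fin_cases i <;>
      simp [sph_comp, hsin, hcos, hcosφ, hsinφ, ← hx, ← hy, ← hz] <;>
      (try field_simp) <;> (try ring)
lemma tele (a φ θ : ℕ → ℝ) (k : ℕ) (hk : 1 ≤ k) :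
    chainEndpoint a φ θ (k + 1) = chainEndpoint a φ θ k +
      a (k+1) • (WithLp.equiv 2 (Fin 3 → ℝ)).symm
        ![Real.sin (θ (k+1)) * Real.cos (φ (k+1)),
          Real.sin (θ (k+1)) * Real.sin (φ (k+1)), Real.cos (θ (k+1))] := by
  unfold chainEndpoint
  rw [Finset.sum_Icc_succ_top (by omega)]

/-- Equivalence of the algebraic and the joint-angle descriptions of the configuration
space: if `p_1, …, p_n ∈ ℝ³` satisfy `p_1 = 0`, `p_n = (a_n, 0, 0)` and
`‖p_j − p_{j+1}‖ = a_j` for `1 ≤ j ≤ n−1`, then there are angle vectors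
`φ ∈ [0,2π)^{n-1}`, `θ ∈ [0,π]^{n-1}` with `f_{a,k}(φ,θ) = p_{k+1}` for every
`1 ≤ k ≤ n−1`; in particular `f_{a,n-1}(φ,θ) = (a_n, 0, 0)`. -/
theorem algebraic_to_joint_angles
    (n : ℕ) (hn : 2 ≤ n) (a : ℕ → ℝ) (ha : ∀ i, 1 ≤ i → i ≤ n → 0 < a i)
    (p : ℕ → EuclideanSpace ℝ (Fin 3))
    (hp1 : p 1 = 0)
    (hpn : p n = (WithLp.equiv 2 (Fin 3 → ℝ)).symm ![a n, 0, 0])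
    (hlen : ∀ j, 1 ≤ j → j ≤ n - 1 → ‖p j - p (j + 1)‖ = a j) :
    ∃ φ θ : ℕ → ℝ,
      (∀ j, 1 ≤ j → j ≤ n - 1 → φ j ∈ Set.Ico (0 : ℝ) (2 * π)) ∧
      (∀ j, 1 ≤ j → j ≤ n - 1 → θ j ∈ Set.Icc (0 : ℝ) π) ∧
      ∀ k, 1 ≤ k → k ≤ n - 1 → chainEndpoint a φ θ k = p (k + 1) := by
  have hP : ∀ j, 1 ≤ j → j ≤ n - 1 → ‖p (j+1) - p j‖ = a j := by
    intro j h1 h2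
    rw [norm_sub_rev]; exact hlen j h1 h2
  have hex : ∀ j, 1 ≤ j → j ≤ n - 1 → ∃ q : ℝ × ℝ,
      q.1 ∈ Set.Ico (0:ℝ) (2*π) ∧ q.2 ∈ Set.Icc (0:ℝ) π ∧
      a j • (WithLp.equiv 2 (Fin 3 → ℝ)).symm
        ![Real.sin q.2 * Real.cos q.1, Real.sin q.2 * Real.sin q.1, Real.cos q.2]
        = p (j+1) - p j := by
    intro j h1 h2
    exact sph _ _ (ha j h1 (by omega)) (hP j h1 h2)
  classical
  set F : ℕ → ℝ × ℝ := fun j =>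
    if h : 1 ≤ j ∧ j ≤ n - 1 then (hex j h.1 h.2).choose else (0, 0) with hF
  refine ⟨fun j => (F j).1, fun j => (F j).2, ?_, ?_, ?_⟩
  · intro j h1 h2
    simp only [hF, dif_pos (⟨h1, h2⟩ : 1 ≤ j ∧ j ≤ n - 1)]
    exact (hex j h1 h2).choose_spec.1
  · intro j h1 h2
    simp only [hF, dif_pos (⟨h1, h2⟩ : 1 ≤ j ∧ j ≤ n - 1)]
    exact (hex j h1 h2).choose_spec.2.1
  · have key : ∀ j, 1 ≤ j → j ≤ n - 1 →
        a j • (WithLp.equiv 2 (Fin 3 → ℝ)).symm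
          ![Real.sin (F j).2 * Real.cos (F j).1,
            Real.sin (F j).2 * Real.sin (F j).1, Real.cos (F j).2]
          = p (j+1) - p j := by
      intro j h1 h2
      simp only [hF, dif_pos (⟨h1, h2⟩ : 1 ≤ j ∧ j ≤ n - 1)]
      exact (hex j h1 h2).choose_spec.2.2
    intro k hk
    induction k with
    | zero => omega
    | succ m ih =>
      intro hle
      rcases Nat.eq_or_lt_of_le hk with h1 | h1
      · -- m + 1 = 1, i.e. m = 0
        have hm : m = 0 := by omega
        subst hm
        unfold chainEndpoint
        rw [show Finset.Icc 1 1 = {1} from rfl, Finset.sum_singleton,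
          key 1 le_rfl hle, hp1, sub_zero]
      · have hm1 : 1 ≤ m := by omega
        rw [tele _ _ _ m hm1, ih hm1 (by omega), key (m+1) (by omega) hle]
        abel
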